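/- arXiv:1711.09014 — 6 statements merged into one kernel-verified Lean document; each statement's English description precedes it below -/
import Mathlib

section
/- Fix integers n, k with k ≥ 1, and a graph H on k vertices. For 1 ≤ j ≤ n−k−1 let G(j, n−k−j) = K_j ⊕ H ⊕ K_{n−k−j} be the graph on n vertices whose vertex set is partitioned into a clique A of size j, a copy of H on k vertices, and a clique C of size n−k−j, with every vertex of A adjacent to every vertex of H and every vertex of H adjacent to every vertex of C, and no edges between A and C. If 2 ≤ j ≤ (n−k)/2, then Π1(G(j, n−k−j)) < Π1(G(1, n−k−1)). -/
open SimpleGraph Finset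

/-- Degree of a vertex (as `Nat.card` of its neighbor set). -/
noncomputable def mdeg {V : Type*} (G : SimpleGraph V) (v : V) : ℕ :=
  Nat.card (G.neighborSet v)

/-- First multiplicative Zagreb index. -/
noncomputable def mZ1 {V : Type*} [Fintype V] (G : SimpleGraph V) : ℕ :=
  ∏ v : V, (mdeg G v) ^ 2

/-- Second multiplicative Zagreb index. -/
noncomputable def mZ2 {V : Type*} [Fintype V] (G : SimpleGraph V) : ℕ :=
  ∏ v : V, (mdeg G v) ^ (mdeg G v)

/-- The graph `K_j ⊕ H ⊕ K_{n-k-j}` on `Fin n`: the first `j` vertices form a clique,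
the next `k` vertices carry a copy of `H`, the last `n - k - j` vertices form a clique,
every vertex of the first clique is joined to every vertex of `H`, every vertex of `H`
is joined to every vertex of the second clique, and there are no edges between the
two cliques. -/
def Gjoin (n k j : ℕ) (H : SimpleGraph (Fin k)) : SimpleGraph (Fin n) :=
  SimpleGraph.fromRel (fun u v =>
    (u.val < j ∧ v.val < j) ∨
    (j + k ≤ u.val ∧ j + k ≤ v.val) ∨
    (u.val < j ∧ j ≤ v.val ∧ v.val < j + k) ∨
    (j + k ≤ u.val ∧ j ≤ v.val ∧ v.val < j + k) ∨
    (∃ a b : Fin k, u.val = j + a.val ∧ v.val = j + b.val ∧ H.Adj a b))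

/-! ### Arithmetic lemmas -/

private lemma lemC (c : ℕ) : ∀ y, y ≤ c → (c+1)^y * (c-y) ≤ c^(y+1) := by
  intro y
  induction y with
  | zero => simp
  | succ y ih =>
    intro hy
    have hy' : y ≤ c := by omega
    have h1 : (c+1)^(y+1) * (c - (y+1)) ≤ (c+1)^y * (c * (c - y)) := by
      have key : (c+1) * (c - (y+1)) ≤ c * (c - y) := by
        rcases Nat.le.dest hy with ⟨d, hd⟩
        have h5 : c - (y+1) = d := by omega
        have h6 : c - y = d + 1 := by omega
        rw [h5, h6]; nlinarith
      calc (c+1)^(y+1) * (c - (y+1)) = (c+1)^y * ((c+1) * (c - (y+1))) := by ring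
        _ ≤ (c+1)^y * (c * (c - y)) := Nat.mul_le_mul_left _ key
    calc (c+1)^(y+1) * (c - (y+1)) ≤ (c+1)^y * (c * (c-y)) := h1
      _ = c * ((c+1)^y * (c-y)) := by ring
      _ ≤ c * c^(y+1) := Nat.mul_le_mul_left _ (ih hy')
      _ = c^(y+2) := by ring

private lemma lemStepX (x y : ℕ) (hx : 1 ≤ x) (hyx : y ≤ x) :
    (x+1)^(2*y+1) ≤ (x+2)^(y+1) * x^y := by
  set c := x * (x+2) with hc
  have hsq : (x+1)^2 = c + 1 := by rw [hc]; ring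
  have hyc : y < c := by nlinarith
  have key := lemC c y (le_of_lt hyc)
  have h2 : (c+1)^y * (x+1) ≤ c^y * (x+2) := by
    have hpos : 0 < c - y := by omega
    have h3 : ((c+1)^y * (x+1)) * (c - y) ≤ (c^y * (x+2)) * (c - y) := by
      calc ((c+1)^y * (x+1)) * (c - y) = ((c+1)^y * (c-y)) * (x+1) := by ring
        _ ≤ c^(y+1) * (x+1) := Nat.mul_le_mul_right _ key
        _ ≤ (c^y * (x+2)) * (c - y) := by
            have hmain : c * (x+1) ≤ (x+2) * (c-y) := by
              have h4 : (x+2) * y ≤ c := by nlinarith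
              rcases Nat.le.dest (le_of_lt hyc) with ⟨d, hd⟩
              have h6 : c - y = d := by omega
              rw [h6]
              have hexp : (x+2)*c = (x+2)*y + (x+2)*d := by rw [← hd]; ring
              nlinarith
            calc c^(y+1) * (x+1) = c^y * (c * (x+1)) := by ring
              _ ≤ c^y * ((x+2) * (c-y)) := Nat.mul_le_mul_left _ hmain
              _ = (c^y * (x+2)) * (c - y) := by ring
    exact Nat.le_of_mul_le_mul_right h3 hpos
  calc (x+1)^(2*y+1) = (c+1)^y * (x+1) := by
        rw [pow_succ, pow_mul, hsq]
    _ ≤ c^y * (x+2) := h2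
    _ = (x+2)^(y+1) * x^y := by rw [hc, mul_pow]; ring

private lemma lemMonoX (y x1 : ℕ) (hx1 : 1 ≤ x1) (hy : y ≤ x1) :
    ∀ x2, x1 ≤ x2 → (x1+1)^(y+1) * x2^y ≤ (x2+1)^(y+1) * x1^y := by
  intro x2 h
  induction x2 with
  | zero => omega
  | succ x2 ih =>
    rcases Nat.lt_or_ge x1 (x2+1) with h1 | h1
    · have hx2 : x1 ≤ x2 := by omega
      have ih' := ih hx2
      have hstep := lemStepX x2 y (by omega) (by omega)
      have h5 : (x1+1)^(y+1) * (x2+1)^y * x2^y ≤ (x2+2)^(y+1) * x1^y * x2^y := by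
        calc (x1+1)^(y+1) * (x2+1)^y * x2^y = ((x1+1)^(y+1) * x2^y) * (x2+1)^y := by ring
          _ ≤ ((x2+1)^(y+1) * x1^y) * (x2+1)^y := Nat.mul_le_mul_right _ ih'
          _ = (x2+1)^(2*y+1) * x1^y := by ring
          _ ≤ ((x2+2)^(y+1) * x2^y) * x1^y := Nat.mul_le_mul_right _ hstep
          _ = (x2+2)^(y+1) * x1^y * x2^y := by ring
      have hx2pos : 0 < x2^y := Nat.pow_pos (by omega)
      exact Nat.le_of_mul_le_mul_right h5 hx2pos
    · have hx1e : x1 = x2 + 1 := by omega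
      subst hx1e
      exact le_rfl

private lemma lemMonoY (x j s : ℕ) (hx : 1 ≤ x) (hjs : j < s) :
    (x+1)^(j+1) * x^s < (x+1)^(s+1) * x^j := by
  rcases Nat.le.dest hjs with ⟨d, hd⟩
  have hd' : s = j + 1 + d := by omega
  subst hd'
  have h1 : x^(d+1) < (x+1)^(d+1) :=
    Nat.pow_lt_pow_left (by omega) (by omega)
  have hApos : 0 < (x+1)^(j+1) * x^j := by positivity
  calc (x+1)^(j+1) * x^(j+1+d) = ((x+1)^(j+1) * x^j) * x^(d+1) := by ring
    _ < ((x+1)^(j+1) * x^j) * (x+1)^(d+1) := mul_lt_mul_of_pos_left h1 hApos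
    _ = (x+1)^(j+1+d+1) * x^j := by ring

private lemma lemStep (a b j s : ℕ) (hja : j ≤ a) (ha : 1 ≤ a) (hab : a + 2 ≤ b)
    (hjs : j + 1 ≤ s) : (a+1)^(j+1) * (b-1)^s < a^j * b^(s+1) := by
  obtain ⟨x2, hx2⟩ : ∃ x2, b = x2 + 1 := ⟨b - 1, by omega⟩
  subst hx2
  simp only [Nat.add_sub_cancel]
  have hx2ge : 1 ≤ x2 := by omega
  have hmx := lemMonoX j a ha hja x2 (by omega)
  have hmy := lemMonoY x2 j s hx2ge (by omega)
  have hApos : 0 < (x2+1)^(j+1) * a^j := by positivity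
  have hbig : ((a+1)^(j+1) * x2^s) * (x2^j * (x2+1)^(j+1)) <
      (a^j * (x2+1)^(s+1)) * (x2^j * (x2+1)^(j+1)) := by
    calc ((a+1)^(j+1) * x2^s) * (x2^j * (x2+1)^(j+1))
        = ((a+1)^(j+1) * x2^j) * ((x2+1)^(j+1) * x2^s) := by ring
      _ ≤ ((x2+1)^(j+1) * a^j) * ((x2+1)^(j+1) * x2^s) := Nat.mul_le_mul_right _ hmx
      _ < ((x2+1)^(j+1) * a^j) * ((x2+1)^(s+1) * x2^j) := mul_lt_mul_of_pos_left hmy hApos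
      _ = (a^j * (x2+1)^(s+1)) * (x2^j * (x2+1)^(j+1)) := by ring
  exact Nat.lt_of_mul_lt_mul_right hbig

private lemma lemArith (k : ℕ) (hk : 1 ≤ k) :
    ∀ j, 2 ≤ j → ∀ n, k + 2*j ≤ n →
    (j+k-1)^j * (n-j-1)^(n-k-j) < k * (n-2)^(n-k-1) := by
  intro j hj
  induction j, hj using Nat.le_induction with
  | base =>
    intro n hn
    have h := lemStep k (n-2) 1 (n-k-2) hk hk (by omega) (by omega)
    have e1 : (2 + k - 1) = k + 1 := by omega
    have e4 : n - k - 2 + 1 = n - k - 1 := by omega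
    rw [e1]
    calc (k+1)^2 * (n-2-1)^(n-k-2) = (k+1)^(1+1) * (n-2-1)^(n-k-2) := by norm_num
      _ < k^1 * (n-2)^(n-k-2+1) := h
      _ = k * (n-2)^(n-k-1) := by rw [e4, pow_one]
  | succ j hj2 ih =>
    intro n hn
    have ih' := ih n (by omega)
    have h := lemStep (j+k-1) (n-j-1) j (n-k-j-1) (by omega) (by omega) (by omega) (by omega)
    have e1 : j + k - 1 + 1 = j + 1 + k - 1 := by omega
    have e2 : n - j - 1 - 1 = n - (j+1) - 1 := by omega
    have e3 : n - k - j - 1 = n - k - (j+1) := by omega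
    have e4 : n - k - j - 1 + 1 = n - k - j := by omega
    rw [e4, e1, e2, e3] at h
    exact lt_trans h ih'

/-! ### Counting lemmas -/

private lemma cardLT (n m : ℕ) (hm : m ≤ n) :
    (Finset.univ.filter (fun u : Fin n => u.val < m)).card = m := by
  have h : ∀ a ∈ Finset.range m, a < n := fun a ha => lt_of_lt_of_le (Finset.mem_range.mp ha) hm
  have : (Finset.univ.filter (fun u : Fin n => u.val < m)) = (Finset.range m).attachFin h := by
    ext u; simp [Finset.mem_attachFin]
  rw [this, Finset.card_attachFin, Finset.card_range]

private lemma cardGE (n m : ℕ) (hm : m ≤ n) :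
    (Finset.univ.filter (fun u : Fin n => m ≤ u.val)).card = n - m := by
  have h1 := cardLT n m hm
  have h2 := Finset.card_filter_add_card_filter_not (s := (Finset.univ : Finset (Fin n)))
    (p := fun u : Fin n => u.val < m)
  simp only [not_lt, Finset.card_univ, Fintype.card_fin] at h2
  omega

/-! ### Adjacency in `Gjoin` -/

section adj
variable {n k j : ℕ} {H : SimpleGraph (Fin k)}

private lemma adj_case1 (v u : Fin n) (hv : v.val < j) :
    (Gjoin n k j H).Adj v u ↔ u ≠ v ∧ u.val < j + k := by
  rw [Gjoin, SimpleGraph.fromRel_adj]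
  constructor
  · rintro ⟨hne, h | h⟩ <;>
    · rcases h with ⟨h1,h2⟩|⟨h1,h2⟩|⟨h1,h2,h3⟩|⟨h1,h2,h3⟩|⟨a,b,h1,h2,h3⟩ <;>
        exact ⟨Ne.symm hne, by omega⟩
  · rintro ⟨hne, hu⟩
    refine ⟨Ne.symm hne, Or.inl ?_⟩
    rcases Nat.lt_or_ge u.val j with h | h
    · exact Or.inl ⟨hv, h⟩
    · exact Or.inr (Or.inr (Or.inl ⟨hv, h, hu⟩))

private lemma adj_case3 (v u : Fin n) (hv : j + k ≤ v.val) :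
    (Gjoin n k j H).Adj v u ↔ u ≠ v ∧ j ≤ u.val := by
  rw [Gjoin, SimpleGraph.fromRel_adj]
  constructor
  · rintro ⟨hne, h | h⟩ <;>
    · rcases h with ⟨h1,h2⟩|⟨h1,h2⟩|⟨h1,h2,h3⟩|⟨h1,h2,h3⟩|⟨a,b,h1,h2,h3⟩ <;>
        exact ⟨Ne.symm hne, by omega⟩
  · rintro ⟨hne, hu⟩
    refine ⟨Ne.symm hne, Or.inl ?_⟩
    rcases Nat.lt_or_ge u.val (j+k) with h | h
    · exact Or.inr (Or.inr (Or.inr (Or.inl ⟨hv, hu, h⟩)))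
    · exact Or.inr (Or.inl ⟨hv, h⟩)

private lemma adj_case2 (v u : Fin n) (a : Fin k) (hva : v.val = j + a.val) :
    (Gjoin n k j H).Adj v u ↔
      (u.val < j ∨ j + k ≤ u.val ∨ ∃ b : Fin k, u.val = j + b.val ∧ H.Adj a b) := by
  have hak := a.isLt
  rw [Gjoin, SimpleGraph.fromRel_adj]
  constructor
  · rintro ⟨hne, h | h⟩
    · rcases h with ⟨h1,h2⟩|⟨h1,h2⟩|⟨h1,h2,h3⟩|⟨h1,h2,h3⟩|⟨a',b,h1,h2,h3⟩
      · omega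
      · omega
      · omega
      · omega
      · refine Or.inr (Or.inr ⟨b, h2, ?_⟩)
        have : a' = a := by apply Fin.ext; omega
        rwa [← this]
    · rcases h with ⟨h1,h2⟩|⟨h1,h2⟩|⟨h1,h2,h3⟩|⟨h1,h2,h3⟩|⟨b,a',h1,h2,h3⟩
      · exact Or.inl h1
      · omega
      · exact Or.inl h1
      · exact Or.inr (Or.inl h1)
      · refine Or.inr (Or.inr ⟨b, h1, ?_⟩)
        have : a' = a := by apply Fin.ext; omega
        rw [← this]; exact h3.symm
  · rintro (h | h | ⟨b, hub, hab⟩)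
    · exact ⟨by intro he; rw [he] at hva; omega,
        Or.inr (Or.inr (Or.inr (Or.inl ⟨h, by omega, by omega⟩)))⟩
    · exact ⟨by intro he; rw [he] at hva; omega,
        Or.inr (Or.inr (Or.inr (Or.inr (Or.inl ⟨h, by omega, by omega⟩))))⟩
    · refine ⟨?_, Or.inl (Or.inr (Or.inr (Or.inr (Or.inr ⟨a, b, hva, hub, hab⟩))))⟩
      intro he
      have : a = b := by apply Fin.ext; omega
      rw [this] at hab
      exact H.irrefl hab

/-! ### Degrees in `Gjoin` -/

private lemma deg_case1 (hjk : j + k ≤ n) (v : Fin n) (hv : v.val < j) :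
    mdeg (Gjoin n k j H) v = j + k - 1 := by
  classical
  have hset : (Gjoin n k j H).neighborSet v =
      ↑((Finset.univ.filter (fun u : Fin n => u.val < j + k)).erase v) := by
    ext u
    simp only [mem_neighborSet, adj_case1 v u hv, Finset.coe_erase, Set.mem_diff,
      Finset.coe_filter, Set.mem_setOf_eq, Finset.mem_univ, true_and,
      Set.mem_singleton_iff]
    tauto
  rw [mdeg, hset, Nat.card_coe_set_eq, Set.ncard_coe_finset,
    Finset.card_erase_of_mem (by simp; omega), cardLT n (j+k) hjk]

private lemma deg_case3 (hjn : j ≤ n) (v : Fin n) (hv : j + k ≤ v.val) :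
    mdeg (Gjoin n k j H) v = n - j - 1 := by
  classical
  have hset : (Gjoin n k j H).neighborSet v =
      ↑((Finset.univ.filter (fun u : Fin n => j ≤ u.val)).erase v) := by
    ext u
    simp only [mem_neighborSet, adj_case3 v u hv, Finset.coe_erase, Set.mem_diff,
      Finset.coe_filter, Set.mem_setOf_eq, Finset.mem_univ, true_and,
      Set.mem_singleton_iff]
    tauto
  rw [mdeg, hset, Nat.card_coe_set_eq, Set.ncard_coe_finset,
    Finset.card_erase_of_mem (by simp; omega), cardGE n j hjn]

private lemma deg_case2 (hjk : j + k ≤ n) (v : Fin n) (a : Fin k)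
    (hva : v.val = j + a.val) :
    mdeg (Gjoin n k j H) v = j + ((n - (j+k)) + Nat.card (H.neighborSet a)) := by
  classical
  set T : Finset (Fin k) := (H.neighborSet a).toFinset with hT
  have hemb : Function.Injective
      (fun b : Fin k => (⟨j + b.val, by have := b.isLt; omega⟩ : Fin n)) := by
    intro b1 b2 h
    apply Fin.ext
    have := congrArg Fin.val h
    simpa using this
  set emb : Fin k ↪ Fin n := ⟨_, hemb⟩ with he
  set S : Finset (Fin n) :=
    (Finset.univ.filter (fun u : Fin n => u.val < j)) ∪
    ((Finset.univ.filter (fun u : Fin n => j + k ≤ u.val)) ∪ T.map emb) with hS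
  have hmem : ∀ u : Fin n, u ∈ S ↔
      (u.val < j ∨ j + k ≤ u.val ∨ ∃ b : Fin k, u.val = j + b.val ∧ H.Adj a b) := by
    intro u
    simp only [hS, Finset.mem_union, Finset.mem_filter, Finset.mem_univ, true_and,
      Finset.mem_map, hT, Set.mem_toFinset, mem_neighborSet, he,
      Function.Embedding.coeFn_mk]
    constructor
    · rintro (h | h | ⟨b, hb, hbe⟩)
      · exact Or.inl h
      · exact Or.inr (Or.inl h)
      · refine Or.inr (Or.inr ⟨b, ?_, hb⟩)
        rw [← hbe]
    · rintro (h | h | ⟨b, hb, hbe⟩)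
      · exact Or.inl h
      · exact Or.inr (Or.inl h)
      · refine Or.inr (Or.inr ⟨b, hbe, ?_⟩)
        apply Fin.ext; simp [hb.symm]
  have hset : (Gjoin n k j H).neighborSet v = ↑S := by
    ext u
    simp only [mem_neighborSet, adj_case2 v u a hva, Finset.mem_coe, hmem u]
  have hd1 : Disjoint (Finset.univ.filter (fun u : Fin n => j + k ≤ u.val)) (T.map emb) := by
    rw [Finset.disjoint_left]
    intro u hu1 hu2
    simp only [Finset.mem_filter, Finset.mem_univ, true_and] at hu1
    simp only [Finset.mem_map, he, Function.Embedding.coeFn_mk] at hu2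
    obtain ⟨b, _, hb⟩ := hu2
    have := congrArg Fin.val hb
    have hbk := b.isLt
    simp at this; omega
  have hd2 : Disjoint (Finset.univ.filter (fun u : Fin n => u.val < j))
      ((Finset.univ.filter (fun u : Fin n => j + k ≤ u.val)) ∪ T.map emb) := by
    rw [Finset.disjoint_left]
    intro u hu1 hu2
    simp only [Finset.mem_filter, Finset.mem_univ, true_and] at hu1
    rcases Finset.mem_union.mp hu2 with h | h
    · simp only [Finset.mem_filter, Finset.mem_univ, true_and] at h; omega
    · simp only [Finset.mem_map, he, Function.Embedding.coeFn_mk] at h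
      obtain ⟨b, _, hb⟩ := h
      have := congrArg Fin.val hb
      simp at this; omega
  have hcardT : (T.map emb).card = Nat.card (H.neighborSet a) := by
    rw [Finset.card_map, hT, Set.toFinset_card, Nat.card_eq_fintype_card]
  rw [mdeg, hset, Nat.card_coe_set_eq, Set.ncard_coe_finset, hS,
    Finset.card_union_of_disjoint hd2, Finset.card_union_of_disjoint hd1,
    cardLT n j (by omega), cardGE n (j+k) hjk, hcardT]

end adj

/-! ### Product formula -/

private lemma mZ1_eq (n k j : ℕ) (H : SimpleGraph (Fin k)) (hjk : j + k ≤ n) :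
    mZ1 (Gjoin n k j H) =
      ((j+k-1)^2)^j *
      ((∏ a : Fin k, (j + ((n - (j+k)) + Nat.card (H.neighborSet a)))^2) *
       ((n-j-1)^2)^(n-(j+k))) := by
  classical
  set G := Gjoin n k j H with hG
  set F : ℕ → ℕ := fun i => if h : i < n then (mdeg G ⟨i, h⟩)^2 else 1 with hF
  have step1 : mZ1 G = ∏ i ∈ Finset.range n, F i := by
    rw [mZ1, ← Fin.prod_univ_eq_prod_range]
    apply Finset.prod_congr rfl
    intro v _
    simp only [hF, v.isLt, dif_pos, Fin.eta]
  have hsplit : ∏ i ∈ Finset.range n, F i =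
      (∏ i ∈ Finset.Ico 0 j, F i) *
      ((∏ i ∈ Finset.Ico j (j+k), F i) * (∏ i ∈ Finset.Ico (j+k) n, F i)) := by
    rw [Finset.prod_Ico_consecutive F (by omega : j ≤ j + k) hjk,
      Finset.prod_Ico_consecutive F (by omega : 0 ≤ j) (by omega : j ≤ n),
      Finset.range_eq_Ico]
  have hb1 : ∏ i ∈ Finset.Ico 0 j, F i = ((j+k-1)^2)^j := by
    have hc : ∀ i ∈ Finset.Ico 0 j, F i = (j+k-1)^2 := by
      intro i hi
      simp only [Finset.mem_Ico] at hi
      have hin : i < n := by omega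
      simp only [hF, dif_pos hin]
      rw [hG, deg_case1 hjk ⟨i, hin⟩ (by simpa using hi.2)]
    rw [Finset.prod_congr rfl hc, Finset.prod_const, Nat.card_Ico, Nat.sub_zero]
  have hb3 : ∏ i ∈ Finset.Ico (j+k) n, F i = ((n-j-1)^2)^(n-(j+k)) := by
    have hc : ∀ i ∈ Finset.Ico (j+k) n, F i = (n-j-1)^2 := by
      intro i hi
      simp only [Finset.mem_Ico] at hi
      simp only [hF, dif_pos hi.2]
      rw [hG, deg_case3 (by omega) ⟨i, hi.2⟩ (by simpa using hi.1)]
    rw [Finset.prod_congr rfl hc, Finset.prod_const, Nat.card_Ico]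
  have hb2 : ∏ i ∈ Finset.Ico j (j+k), F i =
      ∏ a : Fin k, (j + ((n - (j+k)) + Nat.card (H.neighborSet a)))^2 := by
    set Gk : ℕ → ℕ := fun i =>
      if h : i < k then (j + ((n - (j+k)) + Nat.card (H.neighborSet ⟨i, h⟩)))^2 else 1 with hGk
    have e : j + k - j = k := by omega
    rw [Finset.prod_Ico_eq_prod_range, e]
    have h1 : ∀ i ∈ Finset.range k, F (j + i) = Gk i := by
      intro i hi
      rw [Finset.mem_range] at hi
      have hin : j + i < n := by omega
      rw [hF, hGk]
      simp only [hin, dif_pos, hi]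
      rw [hG, deg_case2 hjk ⟨j+i, hin⟩ ⟨i, hi⟩ rfl]
    rw [Finset.prod_congr rfl h1, ← Fin.prod_univ_eq_prod_range]
    apply Finset.prod_congr rfl
    intro a _
    show Gk a.val = _
    simp only [hGk, dif_pos a.isLt, Fin.eta]
  rw [step1, hsplit, hb1, hb2, hb3]

theorem stmt12 (n k j : ℕ) (hk : 1 ≤ k) (H : SimpleGraph (Fin k))
    (hj : 2 ≤ j) (hjn : 2 * j ≤ n - k) :
    mZ1 (Gjoin n k j H) < mZ1 (Gjoin n k 1 H) := by
  have hn : k + 2*j ≤ n := by omega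
  have h2 : j + k ≤ n := by omega
  have h1 : 1 + k ≤ n := by omega
  rw [mZ1_eq n k j H h2, mZ1_eq n k 1 H h1]
  have hmid : ∀ a : Fin k, j + ((n - (j+k)) + Nat.card (H.neighborSet a)) =
      1 + ((n - (1+k)) + Nat.card (H.neighborSet a)) := by
    intro a; omega
  simp only [hmid]
  set P := ∏ a : Fin k, (1 + ((n - (1+k)) + Nat.card (H.neighborSet a)))^2 with hP
  have hPpos : 0 < P := by
    rw [hP]
    apply Finset.prod_pos
    intro a _
    positivity
  have key := lemArith k hk j hj n hn
  have key2 : ((j+k-1)^j * (n-j-1)^(n-k-j))^2 < (k * (n-2)^(n-k-1))^2 :=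
    Nat.pow_lt_pow_left key (by norm_num)
  have e1 : n - (j+k) = n - k - j := by omega
  have e2 : n - (1+k) = n - k - 1 := by omega
  have e3 : 1 + k - 1 = k := by omega
  have e4 : n - 1 - 1 = n - 2 := by omega
  rw [e1, e2, e3, e4]
  have c1 : ∀ x m : ℕ, (x^2)^m = (x^m)^2 := by
    intro x m; rw [← pow_mul, ← pow_mul, Nat.mul_comm]
  rw [c1, c1, c1 (n-2), pow_one]
  calc ((j+k-1)^j)^2 * (P * ((n-j-1)^(n-k-j))^2)
      = P * ((j+k-1)^j * (n-j-1)^(n-k-j))^2 := by rw [mul_pow]; ring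
    _ < P * (k * (n-2)^(n-k-1))^2 := mul_lt_mul_of_pos_left key2 hPpos
    _ = k^2 * (P * ((n-2)^(n-k-1))^2) := by rw [mul_pow]; ring
end

section
/- Let G be a simple connected graph and let u, v be distinct non-adjacent vertices of G with d(u) ≥ d(v). Let v_1, …, v_s (with 1 ≤ s ≤ d(v)) be distinct neighbors of v that are not neighbors of u, and set G′ = G − {vv_1, …, vv_s} + {uv_1, …, uv_s}. Then Π2(G′) > Π2(G). -/
open SimpleGraph Finset

lemma slide (x y t : ℝ) (ht : 0 < t) (hty : t ≤ y) (hyx : y ≤ x) :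
    x * Real.log x + y * Real.log y <
      (x + t) * Real.log (x + t) + (y - t) * Real.log (y - t) := by
  set p := y - t with hp
  set q := x + t with hq
  set D := q - p with hDdef
  have hD : 0 < D := by rw [hDdef, hp, hq]; linarith
  have hp0 : (0:ℝ) ≤ p := by rw [hp]; linarith
  have hq0 : (0:ℝ) ≤ q := by rw [hq]; linarith
  have hpq : p ≠ q := by
    have : p < q := by rw [hp, hq]; linarith
    exact ne_of_lt this
  have hxp : 0 < x - p := by rw [hp]; linarith
  have hqy : 0 < q - y := by rw [hq]; linarith
  have h1 := Real.strictConvexOn_mul_log.2 (Set.mem_Ici.mpr hp0) (Set.mem_Ici.mpr hq0) hpq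
    (div_pos ht hD) (div_pos hxp hD)
    (show t / D + (x - p) / D = 1 by
      rw [← add_div, hDdef, hp, hq]; rw [div_eq_one_iff_eq (by linarith)]; ring)
  have h2 := Real.strictConvexOn_mul_log.2 (Set.mem_Ici.mpr hp0) (Set.mem_Ici.mpr hq0) hpq
    (div_pos hqy hD) (div_pos ht hD)
    (show (q - y) / D + t / D = 1 by
      rw [← add_div, hDdef, hp, hq]; rw [div_eq_one_iff_eq (by linarith)]; ring)
  simp only [smul_eq_mul] at h1 h2
  have e1 : t / D * p + (x - p) / D * q = x := by
    rw [div_mul_eq_mul_div, div_mul_eq_mul_div, ← add_div, hDdef, hp, hq]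
    rw [div_eq_iff (by rw [hDdef, hp, hq] at hD; linarith)]
    ring
  have e2 : (q - y) / D * p + t / D * q = y := by
    rw [div_mul_eq_mul_div, div_mul_eq_mul_div, ← add_div, hDdef, hp, hq]
    rw [div_eq_iff (by rw [hDdef, hp, hq] at hD; linarith)]
    ring
  rw [e1] at h1
  rw [e2] at h2
  have s1 : t / D * (p * Real.log p) + (q - y) / D * (p * Real.log p) = p * Real.log p := by
    rw [← add_mul, ← add_div]
    rw [show t + (q - y) = D by rw [hDdef, hp, hq]; ring, div_self (ne_of_gt hD), one_mul]
  have s2 : (x - p) / D * (q * Real.log q) + t / D * (q * Real.log q) = q * Real.log q := by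
    rw [← add_mul, ← add_div]
    rw [show x - p + t = D by rw [hDdef, hp, hq]; ring, div_self (ne_of_gt hD), one_mul]
  clear_value D p q
  linarith

lemma natpow_exp (n : ℕ) : ((n:ℝ))^n = Real.exp ((n:ℝ) * Real.log n) := by
  rcases Nat.eq_zero_or_pos n with h | h
  · subst h; simp
  · have hn : (0:ℝ) < n := by exact_mod_cast h
    rw [← Real.exp_log hn]
    rw [← Real.exp_nat_mul, Real.exp_log hn]

lemma keyineq (a b s : ℕ) (hs : 1 ≤ s) (hsb : s ≤ b) (hba : b ≤ a) :
    a ^ a * b ^ b < (a + s) ^ (a + s) * (b - s) ^ (b - s) := by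
  have hc : ((b - s : ℕ) : ℝ) = (b : ℝ) - (s : ℝ) := by
    push_cast [Nat.cast_sub hsb]; ring
  rw [← Nat.cast_lt (α := ℝ)]
  simp only [Nat.cast_mul, Nat.cast_pow]
  rw [natpow_exp a, natpow_exp b, natpow_exp (a + s), natpow_exp (b - s),
    ← Real.exp_add, ← Real.exp_add, Real.exp_lt_exp]
  push_cast
  rw [hc]
  exact slide (a : ℝ) (b : ℝ) (s : ℝ) (by exact_mod_cast hs) (by exact_mod_cast hsb)
    (by exact_mod_cast hba)

theorem stmt13 {V : Type*} [Fintype V] (G : SimpleGraph V) (hG : G.Connected)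
    (u v : V) (huv : u ≠ v) (hadj : ¬ G.Adj u v)
    (hdeg : mdeg G v ≤ mdeg G u)
    (B : Finset V) (hBne : B.Nonempty) (hB : (↑B : Set V) ⊆ G.neighborSet v)
    (hBu : ∀ w ∈ B, ¬ G.Adj u w) :
    mZ2 G <
      mZ2 (G.deleteEdges ((fun w => s(v, w)) '' (↑B : Set V)) ⊔
        SimpleGraph.fromEdgeSet ((fun w => s(u, w)) '' (↑B : Set V))) := by
  classical
  set G' : SimpleGraph V := (G.deleteEdges ((fun w => s(v, w)) '' (↑B : Set V)) ⊔
        SimpleGraph.fromEdgeSet ((fun w => s(u, w)) '' (↑B : Set V))) with hG'def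
  have huB : u ∉ B := fun h => hadj ((hB (Finset.mem_coe.mpr h)).symm)
  have hvB : v ∉ B := fun h => G.loopless.irrefl v (hB (Finset.mem_coe.mpr h))
  have hmem : ∀ (z x y : V), (s(x, y) ∈ ((fun w => s(z, w)) '' (↑B : Set V))) ↔
      ((x = z ∧ y ∈ B) ∨ (y = z ∧ x ∈ B)) := by
    intro z x y
    simp only [Set.mem_image, Finset.mem_coe]
    constructor
    · rintro ⟨w, hw, hww⟩
      rw [Sym2.eq_iff] at hww
      rcases hww with ⟨h1, h2⟩ | ⟨h1, h2⟩
      · exact Or.inl ⟨h1.symm, h2 ▸ hw⟩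
      · exact Or.inr ⟨h1.symm, h2 ▸ hw⟩
    · rintro (⟨rfl, hy⟩ | ⟨rfl, hx⟩)
      · exact ⟨y, hy, rfl⟩
      · exact ⟨x, hx, Sym2.eq_swap⟩
  have hAdj : ∀ x y, G'.Adj x y ↔
      ((G.Adj x y ∧ ¬((x = v ∧ y ∈ B) ∨ (y = v ∧ x ∈ B))) ∨
        (((x = u ∧ y ∈ B) ∨ (y = u ∧ x ∈ B)) ∧ x ≠ y)) := by
    intro x y
    rw [hG'def, SimpleGraph.sup_adj, SimpleGraph.deleteEdges_adj,
      SimpleGraph.fromEdgeSet_adj, hmem v x y, hmem u x y]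
  have hNu : G'.neighborSet u = G.neighborSet u ∪ ↑B := by
    ext y
    simp only [SimpleGraph.mem_neighborSet, hAdj, Set.mem_union, Finset.mem_coe]
    constructor
    · rintro (⟨h, -⟩ | ⟨⟨-, hy⟩ | ⟨-, hu⟩, -⟩)
      · exact Or.inl h
      · exact Or.inr hy
      · exact absurd hu huB
    · rintro (h | hy)
      · refine Or.inl ⟨h, ?_⟩
        rintro (⟨h1, -⟩ | ⟨-, hu⟩)
        · exact huv h1
        · exact huB hu
      · refine Or.inr ⟨Or.inl ⟨trivial, hy⟩, ?_⟩
        rintro rfl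
        exact huB hy
  have hNv : G'.neighborSet v = G.neighborSet v \ ↑B := by
    ext y
    simp only [SimpleGraph.mem_neighborSet, hAdj, Set.mem_diff, Finset.mem_coe]
    constructor
    · rintro (⟨h, hn⟩ | ⟨⟨h1, -⟩ | ⟨-, hv⟩, -⟩)
      · exact ⟨h, fun hy => hn (Or.inl ⟨trivial, hy⟩)⟩
      · exact absurd h1.symm huv
      · exact absurd hv hvB
    · rintro ⟨h, hy⟩
      refine Or.inl ⟨h, ?_⟩
      rintro (⟨-, hyB⟩ | ⟨-, hvB'⟩)
      · exact hy hyB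
      · exact hvB hvB'
  have hNB : ∀ x ∈ B, G'.neighborSet x = insert u (G.neighborSet x \ {v}) := by
    intro x hx
    have hxu : x ≠ u := fun h => huB (h ▸ hx)
    have hxv : x ≠ v := fun h => hvB (h ▸ hx)
    ext y
    simp only [SimpleGraph.mem_neighborSet, hAdj, Set.mem_insert_iff, Set.mem_diff,
      Set.mem_singleton_iff]
    constructor
    · rintro (⟨h, hn⟩ | ⟨⟨h1, -⟩ | ⟨rfl, -⟩, -⟩)
      · refine Or.inr ⟨h, ?_⟩
        rintro rfl
        exact hn (Or.inr ⟨rfl, hx⟩)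
      · exact absurd h1 hxu
      · exact Or.inl rfl
    · rintro (rfl | ⟨h, hyv⟩)
      · exact Or.inr ⟨Or.inr ⟨rfl, hx⟩, hxu⟩
      · refine Or.inl ⟨h, ?_⟩
        rintro (⟨h1, -⟩ | ⟨h2, -⟩)
        · exact hxv h1
        · exact hyv h2
  have hNother : ∀ x, x ≠ u → x ≠ v → x ∉ B → G'.neighborSet x = G.neighborSet x := by
    intro x hxu hxv hxB
    ext y
    simp only [SimpleGraph.mem_neighborSet, hAdj]
    constructor
    · rintro (⟨h, -⟩ | ⟨⟨h1, -⟩ | ⟨-, h2⟩, -⟩)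
      · exact h
      · exact absurd h1 hxu
      · exact absurd h2 hxB
    · intro h
      refine Or.inl ⟨h, ?_⟩
      rintro (⟨h1, -⟩ | ⟨-, h2⟩)
      · exact hxv h1
      · exact hxB h2
  have hdegcard : ∀ (H : SimpleGraph V) (x : V), mdeg H x = (H.neighborSet x).ncard :=
    fun H x => Nat.card_coe_set_eq _
  have hdu' : mdeg G' u = mdeg G u + B.card := by
    have hdisj : Disjoint (G.neighborSet u) (↑B : Set V) :=
      Set.disjoint_left.mpr fun x hx hxB => hBu x (Finset.mem_coe.mp hxB) hx
    rw [hdegcard, hdegcard, hNu, Set.ncard_union_eq hdisj (Set.toFinite _) (Set.toFinite _),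
      Set.ncard_coe_finset]
  have hdv' : mdeg G' v = mdeg G v - B.card := by
    rw [hdegcard, hdegcard, hNv, Set.ncard_diff hB (Set.toFinite _), Set.ncard_coe_finset]
  have hsb : B.card ≤ mdeg G v := by
    rw [hdegcard, ← Set.ncard_coe_finset]
    exact Set.ncard_le_ncard hB (Set.toFinite _)
  have hrest : ∀ x, x ≠ u → x ≠ v → mdeg G' x = mdeg G x := by
    intro x hxu hxv
    by_cases hxB : x ∈ B
    · rw [hdegcard, hdegcard, hNB x hxB]
      have hvN : v ∈ G.neighborSet x := (hB (Finset.mem_coe.mpr hxB)).symm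
      have huN : u ∉ G.neighborSet x \ {v} := by
        rintro ⟨hu, -⟩
        exact hBu x hxB hu.symm
      have hpos : 0 < (G.neighborSet x).ncard :=
        (Set.ncard_pos (Set.toFinite _)).mpr ⟨v, hvN⟩
      rw [Set.ncard_insert_of_notMem huN (Set.toFinite _),
        Set.ncard_diff_singleton_of_mem hvN]
      omega
    · rw [hdegcard, hdegcard, hNother x hxu hxv hxB]
  have hsplit : ∀ H : SimpleGraph V, mZ2 H =
      (mdeg H u ^ mdeg H u) * ((mdeg H v ^ mdeg H v) *
        ∏ x ∈ (Finset.univ.erase u).erase v, mdeg H x ^ mdeg H x) := by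
    intro H
    rw [mZ2, ← Finset.mul_prod_erase Finset.univ _ (Finset.mem_univ u),
      ← Finset.mul_prod_erase _ _ (Finset.mem_erase.mpr ⟨huv.symm, Finset.mem_univ v⟩)]
  have hReq : (∏ x ∈ (Finset.univ.erase u).erase v, mdeg G' x ^ mdeg G' x)
      = ∏ x ∈ (Finset.univ.erase u).erase v, mdeg G x ^ mdeg G x := by
    refine Finset.prod_congr rfl fun x hx => ?_
    have h1 := Finset.mem_erase.mp hx
    have h2 := Finset.mem_erase.mp h1.2
    rw [hrest x h2.1 h1.1]
  have hRpos : 0 < ∏ x ∈ (Finset.univ.erase u).erase v, mdeg G x ^ mdeg G x := by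
    apply Finset.prod_pos
    intro x _
    rcases Nat.eq_zero_or_pos (mdeg G x) with h | h
    · rw [h]; norm_num
    · exact pow_pos h _
  rw [hsplit G, hsplit G', hReq, hdu', hdv', ← mul_assoc, ← mul_assoc]
  exact mul_lt_mul_of_pos_right
    (keyineq (mdeg G u) (mdeg G v) B.card (Finset.card_pos.mpr hBne) hsb hdeg) hRpos
end

section
/- Fix integers n, k with k ≥ 1, and a graph H on k vertices. For 1 ≤ j ≤ n−k−1 let G(j, n−k−j) = K_j ⊕ H ⊕ K_{n−k−j} be the graph on n vertices whose vertex set is partitioned into a clique A of size j, a copy of H on k vertices, and a clique C of size n−k−j, with every vertex of A adjacent to every vertex of H and every vertex of H adjacent to every vertex of C, and no edges between A and C. If 2 ≤ j ≤ (n−k)/2, then Π2(G(j, n−k−j)) < Π2(G(1, n−k−1)). -/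
open SimpleGraph Finset

set_option maxHeartbeats 1000000

section aux
open Real

lemma fdiff_upper {x y : ℝ} (hx : 1 ≤ x) (hxy : x ≤ y) :
    y * log y - x * log x ≤ (y - x) * (log y + 1) := by
  have hx0 : (0:ℝ) < x := by linarith
  have hy0 : (0:ℝ) < y := by linarith
  have h1 : log (y / x) ≤ y / x - 1 := log_le_sub_one_of_pos (by positivity)
  have h2 : log (y / x) = log y - log x := log_div (by positivity) (by positivity)
  have h3 : x * (y / x - 1) = y - x := by field_simp
  nlinarith [mul_le_mul_of_nonneg_left h1 hx0.le]

lemma fdiff_lower {x y : ℝ} (hx : 1 ≤ x) (hxy : x ≤ y) :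
    (y - x) * (log x + 1) ≤ y * log y - x * log x := by
  have hx0 : (0:ℝ) < x := by linarith
  have hy0 : (0:ℝ) < y := by linarith
  have h1 : 1 - (y / x)⁻¹ ≤ log (y / x) := one_sub_inv_le_log_of_pos (by positivity)
  have h2 : log (y / x) = log y - log x := log_div (by positivity) (by positivity)
  have h3 : (y / x)⁻¹ = x / y := by field_simp
  have h4 : y * (1 - x / y) = y - x := by field_simp
  nlinarith [mul_le_mul_of_nonneg_left h1 hy0.le]

lemma core_nat (k t m : ℕ) (hk : 1 ≤ k) (ht : 1 ≤ t) (hm : 2 * (t + 1) ≤ m) :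
    (k+t) ^ ((k+t) * (t+1)) * (m+k-t-2) ^ ((m+k-t-2) * (m-t-1))
      < k ^ k * (m+k-2) ^ ((m+k-2) * (m-1)) := by
  obtain ⟨s, rfl, hst⟩ : ∃ s, m = s + t + 2 ∧ t ≤ s := ⟨m - t - 2, by omega, by omega⟩
  have e1 : s + t + 2 + k - t - 2 = s + k := by omega
  have e2 : s + t + 2 - t - 1 = s + 1 := by omega
  have e3 : s + t + 2 + k - 2 = s + t + k := by omega
  have e4 : s + t + 2 - 1 = s + t + 1 := by omega
  rw [e1, e2, e3, e4]
  have hK : (1:ℝ) ≤ (k:ℝ) := by exact_mod_cast hk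
  have hT : (1:ℝ) ≤ (t:ℝ) := by exact_mod_cast ht
  have hS : (t:ℝ) ≤ (s:ℝ) := by exact_mod_cast hst
  have key : ((k+t:ℕ):ℝ) ^ ((k+t) * (t+1)) * ((s+k:ℕ):ℝ) ^ ((s+k) * (s+1))
      < ((k:ℕ):ℝ) ^ k * ((s+t+k:ℕ):ℝ) ^ ((s+t+k) * (s+t+1)) := by
    have ha1 : (1:ℝ) ≤ (k:ℝ) + (t:ℝ) := by linarith
    have hc1 : (1:ℝ) ≤ (s:ℝ) + (k:ℝ) := by linarith
    have hd1 : (1:ℝ) < (s:ℝ) + (t:ℝ) + (k:ℝ) := by linarith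
    have hac : (k:ℝ) + (t:ℝ) ≤ (s:ℝ) + (t:ℝ) + (k:ℝ) := by linarith
    have hcd : (s:ℝ) + (k:ℝ) < (s:ℝ) + (t:ℝ) + (k:ℝ) := by linarith
    have hL0 : (0:ℝ) < ((k+t:ℕ):ℝ) ^ ((k+t) * (t+1)) * ((s+k:ℕ):ℝ) ^ ((s+k) * (s+1)) := by
      have h1 : (0:ℝ) < ((k+t:ℕ):ℝ) := by push_cast; linarith
      have h2 : (0:ℝ) < ((s+k:ℕ):ℝ) := by push_cast; linarith
      positivity
    have hR0 : (0:ℝ) < ((k:ℕ):ℝ) ^ k * ((s+t+k:ℕ):ℝ) ^ ((s+t+k) * (s+t+1)) := by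
      have h1 : (0:ℝ) < ((k:ℕ):ℝ) := by push_cast; linarith
      have h2 : (0:ℝ) < ((s+t+k:ℕ):ℝ) := by push_cast; linarith
      positivity
    rw [← log_lt_log_iff hL0 hR0]
    rw [log_mul (by positivity) (by positivity), log_mul (by positivity) (by positivity),
      log_pow, log_pow, log_pow, log_pow]
    push_cast
    have F1 := fdiff_upper hK (le_add_of_nonneg_right (by linarith : (0:ℝ) ≤ (t:ℝ)))
    have F2 := fdiff_lower ha1 hac
    have hlog1 : (0:ℝ) ≤ log ((k:ℝ) + (t:ℝ)) + 1 := by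
      have := log_nonneg ha1; linarith
    have F3 : ((s:ℝ) + (k:ℝ)) * log ((s:ℝ) + (k:ℝ))
        < ((s:ℝ) + (t:ℝ) + (k:ℝ)) * log ((s:ℝ) + (t:ℝ) + (k:ℝ)) := by
      have h1 : ((s:ℝ) + (k:ℝ)) * log ((s:ℝ) + (k:ℝ))
          ≤ ((s:ℝ) + (k:ℝ)) * log ((s:ℝ) + (t:ℝ) + (k:ℝ)) :=
        mul_le_mul_of_nonneg_left (log_le_log (by linarith) hcd.le) (by linarith)
      have h2 : ((s:ℝ) + (k:ℝ)) * log ((s:ℝ) + (t:ℝ) + (k:ℝ))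
          < ((s:ℝ) + (t:ℝ) + (k:ℝ)) * log ((s:ℝ) + (t:ℝ) + (k:ℝ)) :=
        mul_lt_mul_of_pos_right hcd (log_pos hd1)
      linarith
    nlinarith [mul_le_mul_of_nonneg_left F2 (by linarith : (0:ℝ) ≤ (t:ℝ)),
      mul_lt_mul_of_pos_left F3 (by linarith : (0:ℝ) < (s:ℝ) + 1),
      mul_le_mul_of_nonneg_left hlog1 (by nlinarith : (0:ℝ) ≤ (t:ℝ) * ((s:ℝ) - 1))]
  exact_mod_cast key

end aux


open scoped Classical in
lemma mdeg_eq_card {m : ℕ} (G : SimpleGraph (Fin m)) (v : Fin m) :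
    mdeg G v = (univ.filter (fun u => G.Adj v u)).card := by
  classical
  rw [mdeg, Nat.card_eq_fintype_card]
  rw [← Fintype.card_subtype]
  apply Fintype.card_congr
  exact Equiv.refl _

section adj
variable {n k j : ℕ} {H : SimpleGraph (Fin k)}

lemma adj_A {v u : Fin n} (hv : v.val < j) :
    (Gjoin n k j H).Adj v u ↔ u ≠ v ∧ u.val < j + k := by
  rw [Gjoin, fromRel_adj]
  constructor
  · rintro ⟨hne, h | h⟩ <;>
    · refine ⟨Ne.symm hne, ?_⟩
      rcases h with (⟨h1,h2⟩|⟨h1,h2⟩|⟨h1,h2,h3⟩|⟨h1,h2,h3⟩|⟨a,b,ha,hb,hH⟩) <;>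
        first
          | omega
          | (have := a.isLt; have := b.isLt; omega)
  · rintro ⟨hne, hu⟩
    refine ⟨Ne.symm hne, Or.inl ?_⟩
    by_cases h : u.val < j
    · exact Or.inl ⟨hv, h⟩
    · exact Or.inr (Or.inr (Or.inl ⟨hv, by omega, hu⟩))

lemma adj_C {v u : Fin n} (hv : j + k ≤ v.val) :
    (Gjoin n k j H).Adj v u ↔ u ≠ v ∧ j ≤ u.val := by
  rw [Gjoin, fromRel_adj]
  constructor
  · rintro ⟨hne, h | h⟩ <;>
    · refine ⟨Ne.symm hne, ?_⟩
      rcases h with (⟨h1,h2⟩|⟨h1,h2⟩|⟨h1,h2,h3⟩|⟨h1,h2,h3⟩|⟨a,b,ha,hb,hH⟩) <;>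
        first
          | omega
          | (have := a.isLt; have := b.isLt; omega)
  · rintro ⟨hne, hu⟩
    refine ⟨Ne.symm hne, Or.inl ?_⟩
    by_cases h : u.val < j + k
    · exact Or.inr (Or.inr (Or.inr (Or.inl ⟨hv, hu, h⟩)))
    · exact Or.inr (Or.inl ⟨hv, by omega⟩)

lemma adj_H {v u : Fin n} {a : Fin k} (hv : v.val = j + a.val) :
    (Gjoin n k j H).Adj v u ↔
      (u.val < j ∨ j + k ≤ u.val ∨ ∃ b : Fin k, u.val = j + b.val ∧ H.Adj a b) := by
  have hak := a.isLt
  rw [Gjoin, fromRel_adj]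
  constructor
  · rintro ⟨hne, h | h⟩
    · rcases h with (⟨h1,h2⟩|⟨h1,h2⟩|⟨h1,h2,h3⟩|⟨h1,h2,h3⟩|⟨a',b,ha',hb,hH⟩)
      · omega
      · omega
      · omega
      · omega
      · have : a' = a := by have := a'.isLt; exact Fin.ext (by omega)
        subst this
        exact Or.inr (Or.inr ⟨b, hb, hH⟩)
    · rcases h with (⟨h1,h2⟩|⟨h1,h2⟩|⟨h1,h2,h3⟩|⟨h1,h2,h3⟩|⟨b,a',hb,ha',hH⟩)
      · omega
      · omega
      · exact Or.inl h1
      · exact Or.inr (Or.inl h1)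
      · have : a' = a := by have := a'.isLt; exact Fin.ext (by omega)
        subst this
        exact Or.inr (Or.inr ⟨b, hb, hH.symm⟩)
  · rintro (h | h | ⟨b, hb, hH⟩)
    · exact ⟨by intro e; rw [e] at hv; omega, Or.inr (Or.inr (Or.inr (Or.inl ⟨by omega, by omega, by omega⟩)))⟩
    · exact ⟨by intro e; rw [e] at hv; omega,
        Or.inr (Or.inr (Or.inr (Or.inr (Or.inl ⟨h, by omega, by omega⟩))))⟩
    · refine ⟨?_, Or.inl (Or.inr (Or.inr (Or.inr (Or.inr ⟨a, b, hv, hb, hH⟩))))⟩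
      intro e
      have : a = b := Fin.ext (by omega)
      exact H.loopless.irrefl a (this ▸ hH)

end adj


lemma card_Ico' {n : ℕ} (l r : ℕ) (hr : r ≤ n) :
    (univ.filter (fun u : Fin n => l ≤ u.val ∧ u.val < r)).card = r - l := by
  rw [← Nat.card_Ico l r]
  refine Finset.card_bij' (fun u _ => u.val)
    (fun x hx => ⟨x, by have := Finset.mem_Ico.mp hx; omega⟩) ?_ ?_ ?_ ?_
  · intro a ha; simp at ha ⊢; omega
  · intro x hx; simp at hx ⊢; omega
  · intro a _; rfl
  · intro x _; rfl

lemma card_lt' {n : ℕ} (r : ℕ) (hr : r ≤ n) :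
    (univ.filter (fun u : Fin n => u.val < r)).card = r := by
  have h : (univ.filter (fun u : Fin n => u.val < r))
      = (univ.filter (fun u : Fin n => 0 ≤ u.val ∧ u.val < r)) := by
    apply Finset.filter_congr; intro u _; simp
  rw [h, card_Ico' 0 r hr]
  omega

lemma card_ge' {n : ℕ} (r : ℕ) (hr : r ≤ n) :
    (univ.filter (fun u : Fin n => r ≤ u.val)).card = n - r := by
  have h : (univ.filter (fun u : Fin n => r ≤ u.val))
      = (univ.filter (fun u : Fin n => r ≤ u.val ∧ u.val < n)) := by
    apply Finset.filter_congr; intro u _; simp [u.isLt]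
  rw [h, card_Ico' r n le_rfl]

section deg
variable {n k j : ℕ} {H : SimpleGraph (Fin k)}

open scoped Classical in
lemma deg_A (hn : j + k ≤ n) {v : Fin n} (hv : v.val < j) :
    mdeg (Gjoin n k j H) v = j + k - 1 := by
  classical
  rw [mdeg_eq_card]
  have h : univ.filter (fun u => (Gjoin n k j H).Adj v u)
      = (univ.filter (fun u : Fin n => u.val < j + k)).erase v := by
    ext u
    simp only [Finset.mem_filter, Finset.mem_erase, Finset.mem_univ, true_and, adj_A hv]
    try tauto
  have hm : v ∈ univ.filter (fun u : Fin n => u.val < j + k) := by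
    simp only [Finset.mem_filter, Finset.mem_univ, true_and]; omega
  rw [h, Finset.card_erase_of_mem hm, card_lt' _ hn]

open scoped Classical in
lemma deg_C (hn : j + k ≤ n) {v : Fin n} (hv : j + k ≤ v.val) :
    mdeg (Gjoin n k j H) v = n - j - 1 := by
  classical
  rw [mdeg_eq_card]
  have h : univ.filter (fun u => (Gjoin n k j H).Adj v u)
      = (univ.filter (fun u : Fin n => j ≤ u.val)).erase v := by
    ext u
    simp only [Finset.mem_filter, Finset.mem_erase, Finset.mem_univ, true_and, adj_C hv]
    try tauto
  have hm : v ∈ univ.filter (fun u : Fin n => j ≤ u.val) := by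
    simp only [Finset.mem_filter, Finset.mem_univ, true_and]; omega
  rw [h, Finset.card_erase_of_mem hm, card_ge' _ (by omega)]

open scoped Classical in
lemma deg_H (hn : j + k ≤ n) {v : Fin n} {a : Fin k} (hv : v.val = j + a.val) :
    mdeg (Gjoin n k j H) v = (n - k) + mdeg H a := by
  classical
  rw [mdeg_eq_card, mdeg_eq_card]
  have h : univ.filter (fun u => (Gjoin n k j H).Adj v u)
      = ((univ.filter (fun u : Fin n => u.val < j)) ∪
          (univ.filter (fun u : Fin n => j + k ≤ u.val))) ∪
          (univ.filter (fun u : Fin n => ∃ b : Fin k, u.val = j + b.val ∧ H.Adj a b)) := by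
    ext u
    simp only [Finset.mem_filter, Finset.mem_union, Finset.mem_univ, true_and, adj_H hv]
    try tauto
  have hd1 : Disjoint (univ.filter (fun u : Fin n => u.val < j))
      (univ.filter (fun u : Fin n => j + k ≤ u.val)) := by
    rw [Finset.disjoint_left]
    intro u h1 h2
    simp only [Finset.mem_filter, Finset.mem_univ, true_and] at h1 h2
    omega
  have hd2 : Disjoint ((univ.filter (fun u : Fin n => u.val < j)) ∪
        (univ.filter (fun u : Fin n => j + k ≤ u.val)))
      (univ.filter (fun u : Fin n => ∃ b : Fin k, u.val = j + b.val ∧ H.Adj a b)) := by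
    rw [Finset.disjoint_left]
    intro u h1 h2
    simp only [Finset.mem_filter, Finset.mem_union, Finset.mem_univ, true_and] at h1 h2
    obtain ⟨b, hb, _⟩ := h2
    have := b.isLt
    omega
  have h3 : (univ.filter (fun u : Fin n => ∃ b : Fin k, u.val = j + b.val ∧ H.Adj a b)).card
      = (univ.filter (fun b => H.Adj a b)).card := by
    refine Finset.card_bij' (fun u hu => (⟨u.val - j, by
        obtain ⟨b, hb, _⟩ := (Finset.mem_filter.mp hu).2; have := b.isLt; omega⟩ : Fin k))
      (fun b _ => (⟨j + b.val, by have := b.isLt; omega⟩ : Fin n)) ?_ ?_ ?_ ?_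
    · intro u hu
      obtain ⟨b, hb, hH⟩ := (Finset.mem_filter.mp hu).2
      simp only [Finset.mem_filter, Finset.mem_univ, true_and]
      have he : (⟨u.val - j, by
          obtain ⟨b, hb, _⟩ := (Finset.mem_filter.mp hu).2; have := b.isLt; omega⟩ : Fin k) = b := by
        apply Fin.ext
        show u.val - j = b.val
        omega
      rw [he]
      exact hH
    · intro b hb
      simp only [Finset.mem_filter, Finset.mem_univ, true_and] at hb ⊢
      exact ⟨b, rfl, hb⟩
    · intro u hu
      obtain ⟨b, hb, _⟩ := (Finset.mem_filter.mp hu).2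
      apply Fin.ext
      show j + (u.val - j) = u.val
      omega
    · intro b hb
      apply Fin.ext
      show (j + b.val) - j = b.val
      omega
  rw [h, Finset.card_union_of_disjoint hd2, Finset.card_union_of_disjoint hd1,
    card_lt' _ (by omega), card_ge' _ (by omega), h3]
  omega

end deg


open scoped Classical in
lemma mZ2_formula (n k j : ℕ) (H : SimpleGraph (Fin k)) (hn : j + k ≤ n) :
    mZ2 (Gjoin n k j H) =
      ((j+k-1)^(j+k-1))^j *
      (∏ a : Fin k, ((n-k) + mdeg H a)^((n-k) + mdeg H a)) *
      ((n-j-1)^(n-j-1))^(n-(j+k)) := by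
  classical
  set G := Gjoin n k j H with hG
  set f1 := (univ.filter (fun u : Fin n => u.val < j)) with hf1
  set f2 := (univ.filter (fun u : Fin n => j ≤ u.val ∧ u.val < j + k)) with hf2
  set f3 := (univ.filter (fun u : Fin n => j + k ≤ u.val)) with hf3
  have hsplit : (univ : Finset (Fin n)) = (f1 ∪ f2) ∪ f3 := by
    ext u
    simp only [hf1, hf2, hf3, Finset.mem_univ, Finset.mem_union, Finset.mem_filter, true_and,
      true_iff]
    omega
  have hd1 : Disjoint f1 f2 := by
    rw [Finset.disjoint_left]
    intro u h1 h2
    simp only [hf1, hf2, Finset.mem_filter, Finset.mem_univ, true_and] at h1 h2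
    omega
  have hd2 : Disjoint (f1 ∪ f2) f3 := by
    rw [Finset.disjoint_left]
    intro u h1 h2
    simp only [hf1, hf2, hf3, Finset.mem_filter, Finset.mem_union, Finset.mem_univ,
      true_and] at h1 h2
    omega
  have h1 : ∏ v ∈ f1, (mdeg G v) ^ (mdeg G v) = ((j+k-1)^(j+k-1))^j := by
    have hc : ∀ v ∈ f1, (mdeg G v) ^ (mdeg G v) = (j+k-1)^(j+k-1) := by
      intro v hv
      rw [hG, deg_A hn (by simpa [hf1] using hv)]
    rw [Finset.prod_congr rfl hc, Finset.prod_const, hf1, card_lt' j (by omega)]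
  have h3 : ∏ v ∈ f3, (mdeg G v) ^ (mdeg G v) = ((n-j-1)^(n-j-1))^(n-(j+k)) := by
    have hc : ∀ v ∈ f3, (mdeg G v) ^ (mdeg G v) = (n-j-1)^(n-j-1) := by
      intro v hv
      rw [hG, deg_C hn (by simpa [hf3] using hv)]
    rw [Finset.prod_congr rfl hc, Finset.prod_const, hf3, card_ge' _ hn]
  have h2 : ∏ v ∈ f2, (mdeg G v) ^ (mdeg G v)
      = ∏ a : Fin k, ((n-k) + mdeg H a)^((n-k) + mdeg H a) := by
    refine Finset.prod_bij' (fun u hu => (⟨u.val - j, by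
        have := (Finset.mem_filter.mp hu).2; omega⟩ : Fin k))
      (fun b _ => (⟨j + b.val, by have := b.isLt; omega⟩ : Fin n)) ?_ ?_ ?_ ?_ ?_
    · intro u hu
      exact Finset.mem_univ _
    · intro b hb
      simp only [hf2, Finset.mem_filter, Finset.mem_univ, true_and]
      have := b.isLt
      constructor
      · show j ≤ j + b.val; omega
      · show j + b.val < j + k; omega
    · intro u hu
      have := (Finset.mem_filter.mp hu).2
      apply Fin.ext
      show j + (u.val - j) = u.val
      omega
    · intro b hb
      apply Fin.ext
      show (j + b.val) - j = b.val
      omega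
    · intro u hu
      have hu2 := (Finset.mem_filter.mp hu).2
      have hv : u.val = j + ((⟨u.val - j, by omega⟩ : Fin k)).val := by
        show u.val = j + (u.val - j); omega
      rw [hG, deg_H hn hv]
  calc ∏ v : Fin n, (mdeg G v) ^ (mdeg G v)
      = ∏ v ∈ (f1 ∪ f2) ∪ f3, (mdeg G v) ^ (mdeg G v) := by rw [← hsplit]
    _ = (∏ v ∈ f1 ∪ f2, (mdeg G v) ^ (mdeg G v)) * ∏ v ∈ f3, (mdeg G v) ^ (mdeg G v) :=
        Finset.prod_union hd2
    _ = ((∏ v ∈ f1, (mdeg G v) ^ (mdeg G v)) * ∏ v ∈ f2, (mdeg G v) ^ (mdeg G v))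
          * ∏ v ∈ f3, (mdeg G v) ^ (mdeg G v) := by rw [Finset.prod_union hd1]
    _ = _ := by rw [h1, h2, h3]

theorem stmt14 (n k j : ℕ) (hk : 1 ≤ k) (H : SimpleGraph (Fin k))
    (hj : 2 ≤ j) (hjn : 2 * j ≤ n - k) :
    mZ2 (Gjoin n k j H) < mZ2 (Gjoin n k 1 H) := by
  obtain ⟨t, rfl⟩ : ∃ t, j = t + 1 := ⟨j - 1, by omega⟩
  obtain ⟨m, rfl⟩ : ∃ m, n = m + k := ⟨n - k, by omega⟩
  have hm : 2 * (t + 1) ≤ m := by omega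
  have ht : 1 ≤ t := by omega
  rw [mZ2_formula _ _ _ _ (by omega : (t+1) + k ≤ m + k),
    mZ2_formula _ _ _ _ (by omega : 1 + k ≤ m + k)]
  have e0 : m + k - k = m := by omega
  rw [e0]
  set P := ∏ a : Fin k, (m + mdeg H a)^(m + mdeg H a) with hP
  have hPpos : 0 < P := Finset.prod_pos (fun a _ => pow_pos (by omega) _)
  have e1 : t+1+k-1 = k+t := by omega
  have e2 : m+k-(t+1)-1 = m+k-t-2 := by omega
  have e3 : m+k-(t+1+k) = m-t-1 := by omega
  have e4 : 1+k-1 = k := by omega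
  have e5 : m+k-1-1 = m+k-2 := by omega
  have e6 : m+k-(1+k) = m-1 := by omega
  rw [e1, e2, e3, e4, e5, e6, pow_one, ← pow_mul, ← pow_mul, ← pow_mul]
  have key := core_nat k t m hk ht hm
  calc (k+t)^((k+t)*(t+1)) * P * (m+k-t-2)^((m+k-t-2)*(m-t-1))
      = ((k+t)^((k+t)*(t+1)) * (m+k-t-2)^((m+k-t-2)*(m-t-1))) * P := by ring
    _ < (k^k * (m+k-2)^((m+k-2)*(m-1))) * P := by
        exact mul_lt_mul_of_pos_right key hPpos
    _ = k^k * P * (m+k-2)^((m+k-2)*(m-1)) := by ring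
end

section
/- Let G be a simple connected graph and let v_1, v_2 be distinct vertices of G with d(v_1) = n_1 + 2 and d(v_2) = n_2 + 2 where n_1, n_2 ≥ 1. Let B be a set of n_2 neighbors of v_2, none of which is v_1 or a neighbor of v_1, and let G_1 = G − {v_2 w : w ∈ B} + {v_1 w : w ∈ B} (so that in G_1 vertex v_1 has degree n_1 + n_2 + 2, vertex v_2 has degree 2, and all other degrees are unchanged). Then Π1(G_1) < Π1(G). -/
open SimpleGraph Finset

lemma mdeg_eq_ncard {V : Type*} (G : SimpleGraph V) (v : V) :
    mdeg G v = (G.neighborSet v).ncard := Nat.card_coe_set_eq _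

theorem stmt15 {V : Type*} [Fintype V] (G : SimpleGraph V) (hG : G.Connected)
    (v₁ v₂ : V) (hne : v₁ ≠ v₂) (n₁ n₂ : ℕ) (hn₁ : 1 ≤ n₁) (hn₂ : 1 ≤ n₂)
    (hd₁ : mdeg G v₁ = n₁ + 2) (hd₂ : mdeg G v₂ = n₂ + 2)
    (B : Finset V) (hBcard : B.card = n₂) (hB : (↑B : Set V) ⊆ G.neighborSet v₂)
    (hBv₁ : v₁ ∉ B) (hBadj : ∀ w ∈ B, ¬ G.Adj v₁ w) :
    mZ1 (G.deleteEdges ((fun w => s(v₂, w)) '' (↑B : Set V)) ⊔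
        SimpleGraph.fromEdgeSet ((fun w => s(v₁, w)) '' (↑B : Set V))) < mZ1 G := by
  classical
  set G₁ := G.deleteEdges ((fun w => s(v₂, w)) '' (↑B : Set V)) ⊔
      SimpleGraph.fromEdgeSet ((fun w => s(v₁, w)) '' (↑B : Set V)) with hG₁def
  have hv₂B : v₂ ∉ B := fun h => G.irrefl (hB h)
  have hadj : ∀ a b : V, G₁.Adj a b ↔
      (G.Adj a b ∧ ¬ ∃ w ∈ B, s(v₂, w) = s(a, b)) ∨
      ((∃ w ∈ B, s(v₁, w) = s(a, b)) ∧ a ≠ b) := by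
    intro a b
    simp [hG₁def, SimpleGraph.deleteEdges_adj, SimpleGraph.fromEdgeSet_adj, Set.mem_image]
  -- neighbor set of v₁
  have hN1 : G₁.neighborSet v₁ = G.neighborSet v₁ ∪ ↑B := by
    ext u
    simp only [mem_neighborSet, hadj, Set.mem_union, Finset.mem_coe]
    constructor
    · rintro (⟨h, -⟩ | ⟨⟨w, hw, he⟩, hne'⟩)
      · exact Or.inl h
      · rw [Sym2.eq_iff] at he
        rcases he with ⟨-, rfl⟩ | ⟨-, rfl⟩
        · exact Or.inr hw
        · exact absurd hw hBv₁
    · rintro (h | h)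
      · refine Or.inl ⟨h, ?_⟩
        rintro ⟨w, hw, he⟩
        rw [Sym2.eq_iff] at he
        rcases he with ⟨h1, -⟩ | ⟨-, rfl⟩
        · exact hne h1.symm
        · exact hBv₁ hw
      · exact Or.inr ⟨⟨u, h, rfl⟩, fun hv => hBv₁ (hv ▸ h)⟩
  -- neighbor set of v₂
  have hN2 : G₁.neighborSet v₂ = G.neighborSet v₂ \ ↑B := by
    ext u
    simp only [mem_neighborSet, hadj, Set.mem_diff, Finset.mem_coe]
    constructor
    · rintro (⟨h, hn⟩ | ⟨⟨w, hw, he⟩, hne'⟩)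
      · exact ⟨h, fun hu => hn ⟨u, hu, rfl⟩⟩
      · rw [Sym2.eq_iff] at he
        rcases he with ⟨h1, -⟩ | ⟨-, rfl⟩
        · exact absurd h1 hne
        · exact absurd hw hv₂B
    · rintro ⟨h, hu⟩
      refine Or.inl ⟨h, ?_⟩
      rintro ⟨w, hw, he⟩
      rw [Sym2.eq_iff] at he
      rcases he with ⟨-, rfl⟩ | ⟨rfl, rfl⟩
      · exact hu hw
      · exact hv₂B hw
  -- unchanged degrees
  have hother : ∀ w : V, w ≠ v₁ → w ≠ v₂ → mdeg G₁ w = mdeg G w := by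
    intro w hw1 hw2
    by_cases hwB : w ∈ B
    · have hNw : G₁.neighborSet w = insert v₁ (G.neighborSet w \ {v₂}) := by
        ext u
        simp only [mem_neighborSet, hadj, Set.mem_insert_iff, Set.mem_diff,
          Set.mem_singleton_iff]
        constructor
        · rintro (⟨h, hn⟩ | ⟨⟨x, hx, he⟩, hne'⟩)
          · refine Or.inr ⟨h, fun hu => hn ⟨w, hwB, ?_⟩⟩
            subst hu; exact Sym2.eq_swap
          · rw [Sym2.eq_iff] at he
            rcases he with ⟨rfl, -⟩ | ⟨rfl, rfl⟩
            · exact absurd rfl hw1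
            · exact Or.inl rfl
        · rintro (rfl | ⟨h, hu⟩)
          · exact Or.inr ⟨⟨w, hwB, Sym2.eq_swap⟩, hw1⟩
          · refine Or.inl ⟨h, ?_⟩
            rintro ⟨x, hx, he⟩
            rw [Sym2.eq_iff] at he
            rcases he with ⟨rfl, -⟩ | ⟨rfl, rfl⟩
            · exact hw2 rfl
            · exact hu rfl
      rw [mdeg_eq_ncard, mdeg_eq_ncard, hNw,
        Set.ncard_insert_of_notMem (by
          rintro ⟨h, -⟩
          exact hBadj w hwB (G.adj_symm h)) (Set.toFinite _)]
      exact Set.ncard_diff_singleton_add_one (by exact G.adj_symm (hB hwB)) (Set.toFinite _)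
    · have hNw : G₁.neighborSet w = G.neighborSet w := by
        ext u
        simp only [mem_neighborSet, hadj]
        constructor
        · rintro (⟨h, -⟩ | ⟨⟨x, hx, he⟩, hne'⟩)
          · exact h
          · rw [Sym2.eq_iff] at he
            rcases he with ⟨rfl, rfl⟩ | ⟨rfl, rfl⟩
            · exact absurd rfl hw1
            · exact absurd hx hwB
        · intro h
          refine Or.inl ⟨h, ?_⟩
          rintro ⟨x, hx, he⟩
          rw [Sym2.eq_iff] at he
          rcases he with ⟨rfl, rfl⟩ | ⟨rfl, rfl⟩
          · exact hw2 rfl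
          · exact hwB hx
      rw [mdeg_eq_ncard, mdeg_eq_ncard, hNw]
  -- new degrees of v₁ and v₂
  have hBn : (↑B : Set V).ncard = n₂ := by rw [Set.ncard_coe_finset, hBcard]
  have hd₁' : mdeg G₁ v₁ = n₁ + 2 + n₂ := by
    rw [mdeg_eq_ncard, hN1, Set.ncard_union_eq ?_ (Set.toFinite _) (Set.toFinite _),
      ← mdeg_eq_ncard, hd₁, hBn]
    rw [Set.disjoint_left]
    intro u hu huB
    exact hBadj u huB hu
  have hd₂' : mdeg G₁ v₂ = 2 := by
    rw [mdeg_eq_ncard, hN2, Set.ncard_diff hB (Set.toFinite _), ← mdeg_eq_ncard, hd₂, hBn]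
    omega
  -- positivity of all degrees in G
  have hpos : ∀ w : V, 0 < mdeg G w := by
    intro w
    have : Nontrivial V := ⟨v₁, v₂, hne⟩
    obtain ⟨u, hu⟩ := exists_ne w
    obtain ⟨p⟩ := hG.preconnected w u
    have hne' : ∃ x, G.Adj w x := by
      cases p with
      | nil => exact absurd rfl hu
      | cons h q => exact ⟨_, h⟩
    obtain ⟨x, hx⟩ := hne'
    rw [mdeg_eq_ncard]
    exact (Set.ncard_pos (Set.toFinite _)).mpr ⟨x, hx⟩
  -- assemble
  unfold mZ1
  rw [← Finset.mul_prod_erase univ _ (mem_univ v₁),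
    ← Finset.mul_prod_erase univ (fun v => mdeg G v ^ 2) (mem_univ v₁),
    ← Finset.mul_prod_erase (univ.erase v₁) _ (Finset.mem_erase.mpr ⟨(Ne.symm hne), mem_univ v₂⟩),
    ← Finset.mul_prod_erase (univ.erase v₁) (fun v => mdeg G v ^ 2)
      (Finset.mem_erase.mpr ⟨(Ne.symm hne), mem_univ v₂⟩)]
  have hrest : ∏ w ∈ (univ.erase v₁).erase v₂, mdeg G₁ w ^ 2 =
      ∏ w ∈ (univ.erase v₁).erase v₂, mdeg G w ^ 2 := by
    refine Finset.prod_congr rfl fun w hw => ?_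
    rw [Finset.mem_erase, Finset.mem_erase] at hw
    rw [hother w hw.2.1 hw.1]
  rw [hrest, hd₁', hd₂', hd₁, hd₂]
  set P := ∏ w ∈ (univ.erase v₁).erase v₂, mdeg G w ^ 2 with hP
  have hPpos : 0 < P := Finset.prod_pos fun w _ => pow_pos (hpos w) 2
  have h0 : (n₁ + 2 + n₂) * 2 < (n₁ + 2) * (n₂ + 2) := by nlinarith
  have key : (n₁ + 2 + n₂) ^ 2 * 2 ^ 2 < (n₁ + 2) ^ 2 * (n₂ + 2) ^ 2 := by
    calc (n₁ + 2 + n₂) ^ 2 * 2 ^ 2 = ((n₁ + 2 + n₂) * 2) ^ 2 := by ring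
      _ < ((n₁ + 2) * (n₂ + 2)) ^ 2 := Nat.pow_lt_pow_left h0 (by norm_num)
      _ = (n₁ + 2) ^ 2 * (n₂ + 2) ^ 2 := by ring
  calc (n₁ + 2 + n₂) ^ 2 * (2 ^ 2 * P) = ((n₁ + 2 + n₂) ^ 2 * 2 ^ 2) * P := by ring
    _ < ((n₁ + 2) ^ 2 * (n₂ + 2) ^ 2) * P := Nat.mul_lt_mul_of_pos_right key hPpos
    _ = (n₁ + 2) ^ 2 * ((n₂ + 2) ^ 2 * P) := by ring
end

section
/- For every real number m ≥ 0, the function F_1(x) = (x+m)^x / (x+m−1)^{x−1} is strictly monotonically increasing on the set of real x with x > 0 and x + m > 1; that is, if 1 − m < x < y with x > 0, then (x+m)^x / (x+m−1)^{x−1} < (y+m)^y / (y+m−1)^{y−1}. -/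
theorem stmt17 (m x y : ℝ) (hm : 0 ≤ m) (hx : 0 < x) (hxm : 1 - m < x) (hxy : x < y) :
    (x + m) ^ x / (x + m - 1) ^ (x - 1) < (y + m) ^ y / (y + m - 1) ^ (y - 1) := by
  set c := max 0 (1 - m) with hc
  set g : ℝ → ℝ := fun t => t * Real.log (t + m) - (t - 1) * Real.log (t + m - 1) with hg
  have hpos : ∀ t ∈ Set.Ioi c, 0 < t + m - 1 ∧ 0 < t + m := by
    intro t ht
    have h1 : 1 - m < t := lt_of_le_of_lt (le_max_right _ _) ht
    constructor <;> linarith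
  have hderiv : ∀ t ∈ Set.Ioi c, HasDerivAt g
      (Real.log (t + m) + t * (t + m)⁻¹ - (Real.log (t + m - 1) + (t - 1) * (t + m - 1)⁻¹)) t := by
    intro t ht
    obtain ⟨h1, h2⟩ := hpos t ht
    have d1 : HasDerivAt (fun s : ℝ => s + m) 1 t := (hasDerivAt_id t).add_const m
    have d1' : HasDerivAt (fun s : ℝ => s + m - 1) 1 t := d1.sub_const 1
    have l1 : HasDerivAt (fun s : ℝ => Real.log (s + m)) ((t + m)⁻¹) t := by
      simpa [Function.comp_def] using (Real.hasDerivAt_log h2.ne').comp t d1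
    have l2 : HasDerivAt (fun s : ℝ => Real.log (s + m - 1)) ((t + m - 1)⁻¹) t := by
      simpa [Function.comp_def] using (Real.hasDerivAt_log h1.ne').comp t d1'
    have m1 : HasDerivAt (fun s : ℝ => s * Real.log (s + m))
        (1 * Real.log (t + m) + t * (t + m)⁻¹) t := (hasDerivAt_id t).mul l1
    have m2 : HasDerivAt (fun s : ℝ => (s - 1) * Real.log (s + m - 1))
        (1 * Real.log (t + m - 1) + (t - 1) * (t + m - 1)⁻¹) t :=
      ((hasDerivAt_id t).sub_const 1).mul l2
    simpa [one_mul, hg, Pi.sub_def] using m1.sub m2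
  have hmono : StrictMonoOn g (Set.Ioi c) := by
    apply strictMonoOn_of_deriv_pos (convex_Ioi c)
    · exact fun t ht => (hderiv t ht).continuousAt.continuousWithinAt
    · intro t ht
      rw [interior_Ioi] at ht
      obtain ⟨h1, h2⟩ := hpos t ht
      rw [(hderiv t ht).deriv]
      have hlog : Real.log (t + m - 1) < Real.log (t + m) :=
        Real.log_lt_log h1 (by linarith)
      have hfrac : (t - 1) * (t + m - 1)⁻¹ ≤ t * (t + m)⁻¹ := by
        rw [← div_eq_mul_inv, ← div_eq_mul_inv, div_le_div_iff₀ h1 h2]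
        nlinarith
      linarith
  have hxc : x ∈ Set.Ioi c := by
    simp only [Set.mem_Ioi, hc, max_lt_iff]
    exact ⟨hx, hxm⟩
  have hyc : y ∈ Set.Ioi c := by
    simp only [Set.mem_Ioi, hc, max_lt_iff]
    exact ⟨hx.trans hxy, hxm.trans hxy⟩
  have hgxy : g x < g y := hmono hxc hyc hxy
  obtain ⟨hx1, hx2⟩ := hpos x hxc
  obtain ⟨hy1, hy2⟩ := hpos y hyc
  rw [Real.rpow_def_of_pos hx2, Real.rpow_def_of_pos hx1,
    Real.rpow_def_of_pos hy2, Real.rpow_def_of_pos hy1,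
    ← Real.exp_sub, ← Real.exp_sub, Real.exp_lt_exp]
  have : ∀ t : ℝ, Real.log (t + m) * t - Real.log (t + m - 1) * (t - 1) = g t := by
    intro t; simp [hg]; ring
  rw [this x, this y]
  exact hgxy
end

section
/- For every real number m > 0, the function F_2(x) = x^x / (x+m)^{x+m} is strictly decreasing on the interval (0, ∞); that is, if 0 < x < y, then x^x / (x+m)^{x+m} > y^y / (y+m)^{y+m}. -/
open Real Set

lemma aux18 (m : ℝ) (hm : 0 < m) :
    StrictAntiOn (fun t : ℝ => t * Real.log t - (t + m) * Real.log (t + m)) (Set.Ioi 0) := by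
  apply strictAntiOn_of_deriv_neg (convex_Ioi 0)
  · apply ContinuousOn.sub
    · exact (continuousOn_id.mul (Real.continuousOn_log.mono (by
        intro t ht; exact ne_of_gt ht)))
    · apply ContinuousOn.mul (by fun_prop)
      apply Real.continuousOn_log.comp (by fun_prop)
      intro t ht
      simp only [mem_Ioi] at ht
      exact ne_of_gt (by positivity)
  · intro t ht
    rw [interior_Ioi] at ht
    simp only [mem_Ioi] at ht
    have htm : (0:ℝ) < t + m := by linarith
    have h1 : HasDerivAt (fun t : ℝ => t * Real.log t) (Real.log t + 1) t :=
      Real.hasDerivAt_mul_log (ne_of_gt ht)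
    have h2 : HasDerivAt (fun t : ℝ => (t + m) * Real.log (t + m))
        ((Real.log (t + m) + 1) * 1) t := by
      exact (Real.hasDerivAt_mul_log (ne_of_gt htm)).comp t
        ((hasDerivAt_id t).add_const m)
    have : deriv (fun t : ℝ => t * Real.log t - (t + m) * Real.log (t + m)) t =
        Real.log t + 1 - (Real.log (t + m) + 1) * 1 := (h1.sub h2).deriv
    rw [this]
    have : Real.log t < Real.log (t + m) := Real.log_lt_log ht (by linarith)
    linarith

theorem stmt18 (m x y : ℝ) (hm : 0 < m) (hx : 0 < x) (hxy : x < y) :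
    y ^ y / (y + m) ^ (y + m) < x ^ x / (x + m) ^ (x + m) := by
  have hy : 0 < y := hx.trans hxy
  have hxm : (0:ℝ) < x + m := by linarith
  have hym : (0:ℝ) < y + m := by linarith
  have key := aux18 m hm (Set.mem_Ioi.mpr hx) (Set.mem_Ioi.mpr hy) hxy
  rw [Real.rpow_def_of_pos hx, Real.rpow_def_of_pos hxm, Real.rpow_def_of_pos hy,
    Real.rpow_def_of_pos hym, ← Real.exp_sub, ← Real.exp_sub]
  exact Real.exp_lt_exp.mpr (by rw [mul_comm (Real.log x), mul_comm (Real.log y),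
    mul_comm (Real.log (x+m)), mul_comm (Real.log (y+m))]; exact key)
end
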